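/- If φ and φ' are sequences of pivots, both applicable to a simple graph G, and sup(φ) = sup(φ'), then Gφ = Gφ'. In other words, the result of an applicable sequence of pivots depends only on its support. -/

import Mathlib

set_option linter.unusedSectionVars false

variable {V : Type*} [Fintype V] [DecidableEq V]

/-- Local complementation at a vertex `w`: complement the edges within `N_G(w)`. -/
def SimpleGraph.localComp (G : SimpleGraph V) (w : V) : SimpleGraph V where
  Adj x y := x ≠ y ∧ Xor' (G.Adj x y) (G.Adj x w ∧ G.Adj y w)
  symm := by
    constructor
    intro x y ⟨hne, hx⟩
    refine ⟨hne.symm, ?_⟩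
    have h1 := G.adj_comm x y
    unfold Xor' Xor at hx ⊢
    tauto
  loopless := ⟨by intro x ⟨h, _⟩; exact h rfl⟩

/-- `x ∼_G y` : `x = y` or `{x,y}` is an edge of `G`. -/
def SimpleGraph.nbr (G : SimpleGraph V) (x y : V) : Prop := x = y ∨ G.Adj x y

theorem SimpleGraph.nbr_comm (G : SimpleGraph V) (x y : V) : G.nbr x y ↔ G.nbr y x :=
  or_congr eq_comm (G.adj_comm x y)

private theorem xor_swap_right (a b c : Prop) : Xor' (Xor' a b) c ↔ Xor' (Xor' a c) b := by
  unfold Xor' Xor; tauto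

/-- The pivot `G[uv]` of `G` on an edge `{u,v}`, characterized by
`x ∼_{G[uv]} y ⟺ (x ∼_G y) XOR ((x ∼_G u) ∧ (y ∼_G v)) XOR ((x ∼_G v) ∧ (y ∼_G u))`. -/
def SimpleGraph.pivot (G : SimpleGraph V) (u v : V) : SimpleGraph V where
  Adj x y := x ≠ y ∧
    Xor' (Xor' (G.nbr x y) (G.nbr x u ∧ G.nbr y v)) (G.nbr x v ∧ G.nbr y u)
  symm := by
    constructor
    intro x y ⟨hne, hx⟩
    refine ⟨hne.symm, ?_⟩
    show Xor' (Xor' (G.nbr y x) (G.nbr y u ∧ G.nbr x v)) (G.nbr y v ∧ G.nbr x u)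
    rw [G.nbr_comm y x, and_comm (a := G.nbr y u) (b := G.nbr x v),
      and_comm (a := G.nbr y v) (b := G.nbr x u)]
    exact (xor_swap_right _ _ _).mp hx
  loopless := ⟨by intro x ⟨h, _⟩; exact h rfl⟩

/-- Determinant over GF(2) of the adjacency matrix of the subgraph of `G` induced by `S`. -/
noncomputable def gdet (G : SimpleGraph V) (S : Finset V) : ZMod 2 := by
  classical
  exact Matrix.det (Matrix.of fun i j : S => if G.Adj i j then (1 : ZMod 2) else 0)

/-- Apply a sequence of pivots (left to right). -/
def applyPivots (G : SimpleGraph V) : List (V × V) → SimpleGraph V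
  | [] => G
  | p :: φ => applyPivots (G.pivot p.1 p.2) φ

/-- A sequence of pivots is applicable when each pair is an edge of the graph
obtained by applying all preceding pivots. -/
def PivotsApplicable (G : SimpleGraph V) : List (V × V) → Prop
  | [] => True
  | p :: φ => G.Adj p.1 p.2 ∧ PivotsApplicable (G.pivot p.1 p.2) φ

/-- The support of a sequence of pivots: vertices occurring an odd number of times. -/
def pivotSupport (φ : List (V × V)) : Finset V :=
  Finset.univ.filter fun x => Odd ((φ.flatMap fun p => [p.1, p.2]).count x)

/-- A sequence of pivots is reduced if its pivot vertices are pairwise distinct. -/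
def ReducedSeq (φ : List (V × V)) : Prop := (φ.flatMap fun p => [p.1, p.2]).Nodup

/-- The number of perfect matchings of the subgraph of `G` induced by `S`:
sets of edges of `G` inside `S` such that every vertex of `S` lies in exactly one of them. -/
noncomputable def pmCount (G : SimpleGraph V) (S : Finset V) : ℕ := by
  classical
  exact (Finset.univ.filter fun P : Finset (Sym2 V) =>
    (∀ e ∈ P, e ∈ G.edgeSet ∧ ∀ v ∈ e, v ∈ S) ∧
    ∀ v ∈ S, ∃! e, e ∈ P ∧ v ∈ e).card


namespace PivotAux

open Matrix
open scoped symmDiff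

lemma zmod2_two : (2 : ZMod 2) = 0 := rfl

lemma zmod2_add_self (x : ZMod 2) : x + x = 0 := by
  linear_combination x * zmod2_two

open Classical in
/-- Indicator of a proposition in `GF(2)`. -/
noncomputable def ind (p : Prop) : ZMod 2 := if p then 1 else 0

lemma ind_of_true {p : Prop} (h : p) : ind p = 1 := by unfold ind; exact if_pos h
lemma ind_of_false {p : Prop} (h : ¬p) : ind p = 0 := by unfold ind; exact if_neg h

lemma ind_congr {p q : Prop} (h : p ↔ q) : ind p = ind q := by
  by_cases hp : p
  · rw [ind_of_true hp, ind_of_true (h.mp hp)]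
  · rw [ind_of_false hp, ind_of_false (fun hq => hp (h.mpr hq))]

lemma ind_and (p q : Prop) : ind (p ∧ q) = ind p * ind q := by
  by_cases hp : p <;> by_cases hq : q
  · rw [ind_of_true (p := p ∧ q) ⟨hp, hq⟩, ind_of_true hp, ind_of_true hq]; ring
  · rw [ind_of_false (p := p ∧ q) (fun h => hq h.2), ind_of_false hq]; ring
  · rw [ind_of_false (p := p ∧ q) (fun h => hp h.1), ind_of_false hp]; ring
  · rw [ind_of_false (p := p ∧ q) (fun h => hp h.1), ind_of_false hp]; ring

lemma ind_xor (p q : Prop) : ind (Xor' p q) = ind p + ind q := by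
  by_cases hp : p <;> by_cases hq : q
  · rw [ind_of_false (p := Xor' p q) (fun h => h.elim (fun h => h.2 hq) (fun h => h.2 hp)),
      ind_of_true hp, ind_of_true hq]; decide
  · rw [ind_of_true (p := Xor' p q) (Or.inl ⟨hp, hq⟩), ind_of_true hp, ind_of_false hq]; ring
  · rw [ind_of_true (p := Xor' p q) (Or.inr ⟨hq, hp⟩), ind_of_false hp, ind_of_true hq]; ring
  · rw [ind_of_false (p := Xor' p q) (fun h => h.elim (fun h => hp h.1) (fun h => hq h.1)),
      ind_of_false hp, ind_of_false hq]; ring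

lemma ind_eq_ind_iff {p q : Prop} (h : ind p = ind q) : p ↔ q := by
  by_cases hp : p <;> by_cases hq : q <;> try tauto
  · rw [ind_of_true hp, ind_of_false hq] at h; exact absurd h (by decide)
  · rw [ind_of_false hp, ind_of_true hq] at h; exact absurd h (by decide)

variable {V : Type*} [Fintype V] [DecidableEq V]

/-- Adjacency matrix over `GF(2)`. -/
noncomputable def Aof (G : SimpleGraph V) : Matrix V V (ZMod 2) :=
  Matrix.of fun i j => ind (G.Adj i j)

/-- Indicator of the closed-neighbourhood relation `nbr`. -/
noncomputable def Nf (G : SimpleGraph V) (x y : V) : ZMod 2 := ind (G.nbr x y)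

/-- Standard basis vector. -/
noncomputable def dl (u : V) : V → ZMod 2 := fun w => ind (w = u)

lemma Aof_symm (G : SimpleGraph V) (x y : V) : Aof G x y = Aof G y x :=
  ind_congr (G.adj_comm x y)

lemma Aof_diag (G : SimpleGraph V) (x : V) : Aof G x x = 0 :=
  ind_of_false (G.loopless.irrefl x)

lemma Nf_eq (G : SimpleGraph V) (x y : V) : Nf G x y = ind (x = y) + Aof G x y := by
  by_cases h : x = y
  · subst h
    rw [Nf, ind_of_true (p := G.nbr x x) (Or.inl rfl), ind_of_true rfl, Aof_diag, add_zero]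
  · rw [Nf, ind_congr (show G.nbr x y ↔ G.Adj x y by unfold SimpleGraph.nbr; tauto),
      ind_of_false h, zero_add]; rfl

lemma vecMulVec_mulVec (f g x : V → ZMod 2) :
    (vecMulVec f g).mulVec x = (g ⬝ᵥ x) • f := by
  ext w
  simp [vecMulVec_apply, mulVec, dotProduct, Finset.mul_sum, mul_comm, mul_left_comm]

lemma mulVec_dl (A : Matrix V V (ZMod 2)) (u : V) :
    A.mulVec (dl u) = fun w => A w u := by
  ext w
  simp [mulVec, dotProduct, dl, ind, mul_ite]

lemma dl_apply_self (u : V) : dl u u = 1 := ind_of_true rfl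
lemma dl_apply_ne {w u : V} (h : w ≠ u) : dl w u = 0 := by
  exact ind_of_false (fun hh => h hh.symm)

lemma Nf_dot (G : SimpleGraph V) (u : V) (x : V → ZMod 2) :
    (fun z => Nf G z u) ⬝ᵥ x = x u + (Aof G).mulVec x u := by
  have h1 : ∀ z, Nf G z u * x z = ind (z = u) * x z + Aof G u z * x z := by
    intro z; rw [Nf_eq, Aof_symm G u z, add_mul]
  calc (fun z => Nf G z u) ⬝ᵥ x
      = ∑ z, (ind (z = u) * x z + Aof G u z * x z) := by
        unfold dotProduct; exact Finset.sum_congr rfl fun z _ => h1 z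
    _ = (∑ z, ind (z = u) * x z) + ∑ z, Aof G u z * x z := Finset.sum_add_distrib
    _ = x u + (Aof G).mulVec x u := by
        have h2 : (∑ z, ind (z = u) * x z) = x u := by simp [ind, ite_mul]
        rw [h2]; rfl

lemma Nf_fun_eq (G : SimpleGraph V) (u : V) :
    (fun w => Nf G w u) = dl u + (Aof G).mulVec (dl u) := by
  ext w
  rw [Nf_eq, mulVec_dl]
  rcases eq_or_ne w u with h | h
  · subst h; simp [dl, Pi.add_apply, ind_of_true rfl]
  · simp [dl, Pi.add_apply, ind_of_false h, dl_apply_ne h]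

/-- The pivot corresponds to a rank-2 update of the adjacency matrix. -/
lemma Aof_pivot (G : SimpleGraph V) (u v : V) :
    Aof (G.pivot u v) = Aof G
      + vecMulVec (fun w => Nf G w u) (fun w => Nf G w v)
      + vecMulVec (fun w => Nf G w v) (fun w => Nf G w u) := by
  ext w z
  have hL : Aof (G.pivot u v) w z
      = ind (w ≠ z) * (Nf G w z + Nf G w u * Nf G z v + Nf G w v * Nf G z u) := by
    show ind ((G.pivot u v).Adj w z) = _
    have : (G.pivot u v).Adj w z = (w ≠ z ∧
        Xor' (Xor' (G.nbr w z) (G.nbr w u ∧ G.nbr z v)) (G.nbr w v ∧ G.nbr z u)) := rfl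
    rw [this, ind_and, ind_xor, ind_xor, ind_and, ind_and]
    rfl
  rw [hL]
  simp only [Matrix.add_apply, vecMulVec_apply]
  rcases eq_or_ne w z with h | h
  · subst h
    rw [ind_of_false (fun hh : w ≠ w => hh rfl), zero_mul, Aof_diag,
      mul_comm (Nf G w v) (Nf G w u), zero_add, zmod2_add_self]
  · rw [ind_of_true h, one_mul]
    have : Nf G w z = Aof G w z := by rw [Nf_eq, ind_of_false h, zero_add]
    rw [this]

/-- Coordinate-swap on a pair of vectors, at coordinates in `S`. -/
def sig (S : Finset V) (p : (V → ZMod 2) × (V → ZMod 2)) :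
    (V → ZMod 2) × (V → ZMod 2) :=
  (fun w => if w ∈ S then p.2 w else p.1 w, fun w => if w ∈ S then p.1 w else p.2 w)

lemma sig_empty (p : (V → ZMod 2) × (V → ZMod 2)) : sig ∅ p = p := by
  unfold sig; simp

lemma sig_sig (S T : Finset V) (p : (V → ZMod 2) × (V → ZMod 2)) :
    sig S (sig T p) = sig (S ∆ T) p := by
  unfold sig
  refine Prod.ext ?_ ?_ <;> funext w <;>
    by_cases hS : w ∈ S <;> by_cases hT : w ∈ T <;>
    simp [hS, hT, Finset.mem_symmDiff]

lemma sig_invol (S : Finset V) (p : (V → ZMod 2) × (V → ZMod 2)) :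
    sig S (sig S p) = p := by
  rw [sig_sig, symmDiff_self]; exact sig_empty p

/-- The "graph" (in the linear-relation sense) of a matrix. -/
noncomputable def Lset (A : Matrix V V (ZMod 2)) : Set ((V → ZMod 2) × (V → ZMod 2)) :=
  Set.range fun x => (x, A.mulVec x)

/-- Key computation: pivoting along an edge `uv` corresponds to swapping the
`u`- and `v`-coordinates between a vector and its image. -/
lemma pivot_mulVec {G : SimpleGraph V} {u v : V} (huv : G.Adj u v) (x : V → ZMod 2) :
    (Aof (G.pivot u v)).mulVec
      (x + (x u + (Aof G).mulVec x u) • dl u + (x v + (Aof G).mulVec x v) • dl v)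
    = (Aof G).mulVec x + (x u + (Aof G).mulVec x u) • dl u
        + (x v + (Aof G).mulVec x v) • dl v := by
  have hne : u ≠ v := huv.ne
  set y := (Aof G).mulVec x with hy
  set a := x u + y u with ha
  set b := x v + y v with hb
  set x' := x + a • dl u + b • dl v with hx'
  -- basic values
  have hAuv : Aof G u v = 1 := ind_of_true huv
  have hAvu : Aof G v u = 1 := ind_of_true huv.symm
  have hcolu : (Aof G).mulVec (dl u) = fun w => Aof G w u := mulVec_dl _ u
  have hcolv : (Aof G).mulVec (dl v) = fun w => Aof G w v := mulVec_dl _ v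
  -- A x'
  have hAx' : (Aof G).mulVec x' = y + a • (Aof G).mulVec (dl u) + b • (Aof G).mulVec (dl v) := by
    rw [hx', mulVec_add, mulVec_add, mulVec_smul, mulVec_smul, hy]
  -- x' at u, v
  have hx'u : x' u = y u := by
    rw [hx']
    simp only [Pi.add_apply, Pi.smul_apply, smul_eq_mul, dl_apply_self,
      dl_apply_ne hne.symm, mul_one, mul_zero, add_zero, ha]
    linear_combination (x u) * zmod2_two
  have hx'v : x' v = y v := by
    rw [hx']
    simp only [Pi.add_apply, Pi.smul_apply, smul_eq_mul, dl_apply_self,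
      dl_apply_ne hne, mul_one, mul_zero, add_zero, hb]
    linear_combination (x v) * zmod2_two
  -- the two dot products
  have hdv : (fun z => Nf G z v) ⬝ᵥ x' = a := by
    rw [Nf_dot, hAx', hx'v]
    simp only [Pi.add_apply, Pi.smul_apply, smul_eq_mul, hcolu, hcolv, hAvu, Aof_diag,
      mul_one, mul_zero, add_zero]
    linear_combination (y v) * zmod2_two
  have hdu : (fun z => Nf G z u) ⬝ᵥ x' = b := by
    rw [Nf_dot, hAx', hx'u]
    simp only [Pi.add_apply, Pi.smul_apply, smul_eq_mul, hcolu, hcolv, hAuv, Aof_diag,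
      mul_one, mul_zero, add_zero, zero_add]
    linear_combination (y u) * zmod2_two
  -- put everything together
  rw [Aof_pivot G u v, Matrix.add_mulVec, Matrix.add_mulVec,
    vecMulVec_mulVec, vecMulVec_mulVec, hdu, hdv, hAx', Nf_fun_eq, Nf_fun_eq]
  funext w
  simp only [Pi.add_apply, Pi.smul_apply, smul_eq_mul]
  linear_combination (a * ((Aof G).mulVec (dl u) w) + b * ((Aof G).mulVec (dl v) w)) * zmod2_two

/-- Single pivot, on the level of linear relations. -/
lemma pivot_image {G : SimpleGraph V} {u v : V} (huv : G.Adj u v) :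
    sig {u, v} '' Lset (Aof G) = Lset (Aof (G.pivot u v)) := by
  have hne : u ≠ v := huv.ne
  set A := Aof G with hA
  set A' := Aof (G.pivot u v) with hA'
  set π : (V → ZMod 2) → (V → ZMod 2) := fun x =>
    x + (x u + A.mulVec x u) • dl u + (x v + A.mulVec x v) • dl v with hπ
  have key : ∀ x : V → ZMod 2,
      sig {u, v} (x, A.mulVec x) = (π x, A'.mulVec (π x)) := by
    intro x
    have h2 := pivot_mulVec huv x
    refine Prod.ext ?_ ?_
    · funext w
      show (if w ∈ ({u, v} : Finset V) then A.mulVec x w else x w) = π x w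
      rw [hπ]
      simp only [Pi.add_apply, Pi.smul_apply, smul_eq_mul, Finset.mem_insert,
        Finset.mem_singleton]
      rcases eq_or_ne w u with h | h
      · subst h
        rw [if_pos (Or.inl rfl), dl_apply_self, dl_apply_ne hne.symm]
        linear_combination (-(x w)) * zmod2_two
      · rcases eq_or_ne w v with h' | h'
        · subst h'
          rw [if_pos (Or.inr rfl), dl_apply_self, dl_apply_ne hne]
          linear_combination (-(x w)) * zmod2_two
        · rw [if_neg (by tauto), dl_apply_ne h.symm, dl_apply_ne h'.symm]
          ring
    · funext w
      show (if w ∈ ({u, v} : Finset V) then x w else A.mulVec x w)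
          = A'.mulVec (π x) w
      have := congrFun h2 w
      rw [hπ]
      rw [show (Aof (G.pivot u v)).mulVec
          (x + (x u + (Aof G).mulVec x u) • dl u + (x v + (Aof G).mulVec x v) • dl v) w
          = (A.mulVec x + (x u + A.mulVec x u) • dl u + (x v + A.mulVec x v) • dl v) w
          from this]
      simp only [Pi.add_apply, Pi.smul_apply, smul_eq_mul, Finset.mem_insert,
        Finset.mem_singleton]
      rcases eq_or_ne w u with h | h
      · subst h
        rw [if_pos (Or.inl rfl), dl_apply_self, dl_apply_ne hne.symm]
        linear_combination (-(A.mulVec x w)) * zmod2_two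
      · rcases eq_or_ne w v with h' | h'
        · subst h'
          rw [if_pos (Or.inr rfl), dl_apply_self, dl_apply_ne hne]
          linear_combination (-(A.mulVec x w)) * zmod2_two
        · rw [if_neg (by tauto), dl_apply_ne h.symm, dl_apply_ne h'.symm]
          ring
  -- π is injective, hence surjective
  have hπinj : Function.Injective π := by
    intro x₁ x₂ h
    have e1 : sig {u, v} (x₁, A.mulVec x₁) = sig {u, v} (x₂, A.mulVec x₂) := by
      rw [key, key, h]
    have e2 : (x₁, A.mulVec x₁) = (x₂, A.mulVec x₂) := by
      have := congrArg (sig {u, v}) e1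
      rwa [sig_invol, sig_invol] at this
    exact congrArg Prod.fst e2
  have hπsurj : Function.Surjective π :=
    Finite.injective_iff_surjective.mp hπinj
  -- conclude
  have h3 : sig {u, v} '' Lset A = Set.range fun x => (π x, A'.mulVec (π x)) := by
    rw [Lset, ← Set.range_comp]
    exact congrArg Set.range (funext fun x => key x)
  rw [h3, Lset]
  have h4 : (fun x => (π x, A'.mulVec (π x))) = (fun x => (x, A'.mulVec x)) ∘ π := rfl
  rw [h4, Set.range_comp, hπsurj.range_eq, Set.image_univ]

/-- Support of a cons. -/
lemma pivotSupport_cons (p : V × V) (ψ : List (V × V)) (hp : p.1 ≠ p.2) :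
    pivotSupport (p :: ψ) = ({p.1, p.2} : Finset V) ∆ pivotSupport ψ := by
  ext x
  simp only [pivotSupport, Finset.mem_filter, Finset.mem_univ, true_and,
    Finset.mem_symmDiff, Finset.mem_insert, Finset.mem_singleton]
  have hflat : ((p :: ψ).flatMap fun q => [q.1, q.2])
      = [p.1, p.2] ++ ψ.flatMap fun q => [q.1, q.2] := rfl
  rw [hflat, List.count_append]
  set c := ((ψ.flatMap fun q => [q.1, q.2])).count x with hc
  have h12 : (([p.1, p.2] : List V)).count x = (if x = p.1 then 1 else 0) + (if x = p.2 then 1 else 0) := by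
    rcases eq_or_ne x p.1 with h1 | h1 <;> rcases eq_or_ne x p.2 with h2 | h2 <;>
      simp [List.count_cons, List.count_nil, h1, h2, hp, Ne.symm hp] <;>
      exact ⟨Ne.symm h2, Ne.symm h1⟩
  rw [h12, Nat.odd_iff, Nat.odd_iff]
  rcases eq_or_ne x p.1 with h1 | h1 <;> rcases eq_or_ne x p.2 with h2 | h2
  · exact absurd (h1 ▸ h2) hp
  · simp only [if_pos h1, if_neg h2]
    constructor
    · intro h; left; exact ⟨Or.inl h1, by omega⟩
    · intro h
      rcases h with ⟨_, h⟩ | ⟨h, h'⟩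
      · omega
      · exact absurd (Or.inl h1) h'
  · simp only [if_neg h1, if_pos h2]
    constructor
    · intro h; left; exact ⟨Or.inr h2, by omega⟩
    · intro h
      rcases h with ⟨_, h⟩ | ⟨h, h'⟩
      · omega
      · exact absurd (Or.inr h2) h'
  · simp only [if_neg h1, if_neg h2]
    constructor
    · intro h; right; exact ⟨by omega, by tauto⟩
    · intro h
      rcases h with ⟨h, _⟩ | ⟨h, h'⟩
      · tauto
      · omega

lemma pivotSupport_nil : (pivotSupport ([] : List (V × V))) = ∅ := by
  ext x
  simp [pivotSupport]

/-- Main induction: an applicable pivot sequence acts on the linear relation of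
the adjacency matrix by the coordinate swap over its support. -/
lemma main_lemma (φ : List (V × V)) :
    ∀ G : SimpleGraph V, PivotsApplicable G φ →
      sig (pivotSupport φ) '' Lset (Aof G) = Lset (Aof (applyPivots G φ)) := by
  induction φ with
  | nil =>
      intro G _
      rw [pivotSupport_nil]
      show sig ∅ '' Lset (Aof G) = Lset (Aof G)
      have : sig (∅ : Finset V) = id := funext fun p => sig_empty p
      rw [this, Set.image_id]
  | cons p ψ ih =>
      intro G h
      obtain ⟨hadj, happ⟩ := h
      have hstep : applyPivots G (p :: ψ) = applyPivots (G.pivot p.1 p.2) ψ := rfl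
      rw [hstep, ← ih (G.pivot p.1 p.2) happ,
        pivotSupport_cons p ψ hadj.ne, ← pivot_image hadj, ← Set.image_comp]
      refine congrFun (congrArg Set.image ?_) _
      funext q
      show sig (({p.1, p.2} : Finset V) ∆ pivotSupport ψ) q
          = sig (pivotSupport ψ) (sig {p.1, p.2} q)
      rw [sig_sig, symmDiff_comm]

/-- Two matrices with the same linear relation are equal. -/
lemma eq_of_Lset_eq {A B : Matrix V V (ZMod 2)} (h : Lset A = Lset B) : A = B := by
  ext w z
  have hmem : (dl z, A.mulVec (dl z)) ∈ Lset B := by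
    rw [← h]; exact ⟨dl z, rfl⟩
  obtain ⟨x, hx⟩ := hmem
  have hx1 : x = dl z := congrArg Prod.fst hx
  have hx2 : B.mulVec (dl z) = A.mulVec (dl z) := by
    have := congrArg Prod.snd hx
    rwa [hx1] at this
  have h5 := congrFun hx2 w
  simp only [mulVec_dl] at h5
  exact h5.symm

/-- Graphs with equal adjacency matrices are equal. -/
lemma graph_eq_of_Aof_eq {G₁ G₂ : SimpleGraph V} (h : Aof G₁ = Aof G₂) : G₁ = G₂ := by
  ext w z
  exact ind_eq_ind_iff (congrFun (congrFun h w) z)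

end PivotAux


/-- Two applicable sequences of pivots with equal support
yield the same graph. -/
theorem applyPivots_eq_of_support_eq (G : SimpleGraph V) (phi phi' : List (V × V))
    (h : PivotsApplicable G phi) (h' : PivotsApplicable G phi')
    (hs : pivotSupport phi = pivotSupport phi') :
    applyPivots G phi = applyPivots G phi' := by
  apply PivotAux.graph_eq_of_Aof_eq
  apply PivotAux.eq_of_Lset_eq
  rw [← PivotAux.main_lemma phi G h, ← PivotAux.main_lemma phi' G h', hs]
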